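/- Let X = {x, y, z, w} be a set of four distinct alternatives, 𝓑 = {{x, z}, {x, y, w}, {y, w}}, and let c be the choice function with c({x, z}) = x, c({x, y, w}) = x, and c({y, w}) = y. Then: (a) for every rationalizing pair (≻, Γ) witnessing that (𝓑, c) is rationalizable with 2nd order CLA, one has |{a ∈ X : x ≻ a}| ≥ 2 (x is revealed to be at least second best); and (b) there exists such a rationalizing pair with |{a ∈ X : x ≻ a}| = 2, so x need not be ≻-maximal. -/

import Mathlib

/-- A strict preference relation: complete on distinct elements, transitive, asymmetric. -/
def StrictPref {X : Type*} (r : X → X → Prop) : Prop :=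
  (∀ x y : X, x ≠ y → r x y ∨ r y x) ∧
  (∀ x y z : X, r x y → r y z → r x z) ∧
  (∀ x y : X, r x y → ¬ r y x)

/-- An attention filter: for every nonempty budget `B`, `Γ B` is a nonempty subset of `B`,
and removing an unconsidered alternative does not change the consideration set. -/
def AttentionFilter {X : Type*} [DecidableEq X] (Γ : Finset X → Finset X) : Prop :=
  ∀ B : Finset X, B.Nonempty →
    (Γ B).Nonempty ∧ Γ B ⊆ B ∧ ∀ x ∈ B, x ∉ Γ B → Γ (B.erase x) = Γ B

/-- `(r, Γ)` is a rationalizing pair for the data set `(𝓑, c)` with `k`-th order CLA. -/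
def Rationalizes {X : Type*} [DecidableEq X] (𝓑 : Set (Finset X)) (c : Finset X → X)
    (k : ℕ) (r : X → X → Prop) (Γ : Finset X → Finset X) : Prop :=
  StrictPref r ∧ AttentionFilter Γ ∧
  (∀ B : Finset X, B.Nonempty → min B.card k ≤ (Γ B).card) ∧
  ∀ B ∈ 𝓑, c B ∈ Γ B ∧ ∀ y ∈ Γ B, y ≠ c B → r (c B) y

/-- The data set `(𝓑, c)` is rationalizable with `k`-th order CLA. -/
def RationalizableCLA {X : Type*} [DecidableEq X] (𝓑 : Set (Finset X))
    (c : Finset X → X) (k : ℕ) : Prop :=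
  ∃ (r : X → X → Prop) (Γ : Finset X → Finset X), Rationalizes 𝓑 c k r Γ

theorem example_second_best {X : Type*} [Fintype X] [DecidableEq X] (x y z w : X)
    (hxy : x ≠ y) (hxz : x ≠ z) (hxw : x ≠ w)
    (hyz : y ≠ z) (hyw : y ≠ w) (hzw : z ≠ w)
    (huniv : ∀ a : X, a = x ∨ a = y ∨ a = z ∨ a = w)
    (c : Finset X → X)
    (h1 : c {x, z} = x) (h2 : c {x, y, w} = x) (h3 : c {y, w} = y) :
    (∀ (r : X → X → Prop) (Γ : Finset X → Finset X),
        Rationalizes ({{x, z}, {x, y, w}, {y, w}} : Set (Finset X)) c 2 r Γ →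
        2 ≤ Set.ncard {a : X | r x a}) ∧
    (∃ (r : X → X → Prop) (Γ : Finset X → Finset X),
        Rationalizes ({{x, z}, {x, y, w}, {y, w}} : Set (Finset X)) c 2 r Γ ∧
        Set.ncard {a : X | r x a} = 2) := by
  have hcard1 : ({x, z} : Finset X).card = 2 := Finset.card_pair hxz
  have hcard2 : ({x, y, w} : Finset X).card = 3 := by
    rw [Finset.card_insert_of_notMem (by simp [hxy, hxw]),
      Finset.card_pair hyw]
  constructor
  · rintro r Γ ⟨⟨hcomp, htrans, hasym⟩, hAF, hk, hch⟩
    -- budget {x, z}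
    have hne1 : ({x, z} : Finset X).Nonempty := ⟨x, by simp⟩
    have hsub1 : Γ {x, z} ⊆ {x, z} := (hAF _ hne1).2.1
    have hkk1 : 2 ≤ (Γ {x, z}).card := by
      have := hk _ hne1; rwa [hcard1, min_self] at this
    have hG1 : Γ {x, z} = {x, z} :=
      Finset.eq_of_subset_of_card_le hsub1 (by rw [hcard1]; exact hkk1)
    have hch1 := hch {x, z} (by simp)
    have hrxz : r x z := by
      have := hch1.2 z (by rw [hG1]; simp) (by rw [h1]; exact (Ne.symm hxz))
      rwa [h1] at this
    -- budget {x, y, w}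
    have hne2 : ({x, y, w} : Finset X).Nonempty := ⟨x, by simp⟩
    have hsub2 : Γ {x, y, w} ⊆ {x, y, w} := (hAF _ hne2).2.1
    have hkk2 : 2 ≤ (Γ {x, y, w}).card := by
      have := hk _ hne2; rwa [hcard2] at this; 
    have hch2 := hch {x, y, w} (by simp)
    obtain ⟨t, ht, htx⟩ :=
      Finset.exists_mem_ne (show 1 < (Γ {x, y, w}).card by omega) x
    have hrxt : r x t := by
      have := hch2.2 t ht (by rw [h2]; exact htx)
      rwa [h2] at this
    have htyw : t = y ∨ t = w := by
      have := hsub2 ht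
      simp only [Finset.mem_insert, Finset.mem_singleton] at this
      tauto
    have hzt : z ≠ t := by rcases htyw with h | h <;> subst h
      <;> [exact (Ne.symm hyz); exact hzw]
    have hsub : ({z, t} : Set X) ⊆ {a : X | r x a} := by
      rintro a (rfl | rfl)
      · exact hrxz
      · exact hrxt
    calc 2 = ({z, t} : Set X).ncard := (Set.ncard_pair hzt).symm
      _ ≤ _ := Set.ncard_le_ncard hsub (Set.toFinite _)
  · -- construction
    set f : X → ℕ := fun a => if a = y then 0 else if a = x then 1 else if a = z then 2 else 3 with hf
    have fx : f x = 1 := by simp [hf, hxy]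
    have fy : f y = 0 := by simp [hf]
    have fz : f z = 2 := by simp [hf, Ne.symm hyz, Ne.symm hxz]
    have fw : f w = 3 := by simp [hf, Ne.symm hyw, Ne.symm hxw, Ne.symm hzw]
    have finj : ∀ a b : X, f a = f b → a = b := by
      intro a b hab
      rcases huniv a with rfl | rfl | rfl | rfl <;> rcases huniv b with rfl | rfl | rfl | rfl <;>
        first | rfl | exact absurd hab (by simp [fx, fy, fz, fw])
    refine ⟨fun a b => f a < f b,
      fun B => if y ∈ B ∧ 3 ≤ B.card then B.erase y else B, ⟨⟨?_, ?_, ?_⟩, ?_, ?_, ?_⟩, ?_⟩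
    · intro a b hab
      rcases lt_trichotomy (f a) (f b) with h | h | h
      · exact Or.inl h
      · exact absurd (finj a b h) hab
      · exact Or.inr h
    · intro a b c' h1 h2; exact lt_trans h1 h2
    · intro a b h1; omega
    · intro B hB
      refine ⟨?_, ?_, ?_⟩ <;> beta_reduce
      · split_ifs with h
        · rw [← Finset.card_pos, Finset.card_erase_of_mem h.1]; omega
        · exact hB
      · split_ifs with h
        · exact Finset.erase_subset _ _
        · exact subset_rfl
      · intro a haB haG
        split_ifs at haG with h
        · have hay : a = y := by
            by_contra hay
            exact haG (Finset.mem_erase.2 ⟨hay, haB⟩)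
          subst hay
          rw [if_neg (by simp), if_pos h]
        · exact absurd haB haG
    · intro B hB
      beta_reduce
      split_ifs with h
      · rw [Finset.card_erase_of_mem h.1]; omega
      · exact min_le_left _ _
    · intro B hB
      simp only [Set.mem_insert_iff, Set.mem_singleton_iff] at hB
      rcases hB with rfl | rfl | rfl <;> beta_reduce
      · have hy : y ∉ ({x, z} : Finset X) := by simp [Ne.symm hxy, hyz]
        rw [if_neg (by simp [hy])]
        refine ⟨by rw [h1]; simp, ?_⟩
        intro t ht htne
        rw [h1] at htne ⊢
        simp only [Finset.mem_insert, Finset.mem_singleton] at ht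
        rcases ht with rfl | rfl
        · exact absurd rfl htne
        · rw [fx, fz]; omega
      · rw [if_pos ⟨by simp, by rw [hcard2]⟩]
        refine ⟨by rw [h2]; exact Finset.mem_erase.2 ⟨hxy, by simp⟩, ?_⟩
        intro t ht htne
        rw [h2] at htne ⊢
        rw [Finset.mem_erase] at ht
        simp only [Finset.mem_insert, Finset.mem_singleton] at ht
        rcases ht.2 with rfl | rfl | rfl
        · exact absurd rfl htne
        · exact absurd rfl ht.1
        · rw [fx, fw]; omega
      · have hc : ¬ (y ∈ ({y, w} : Finset X) ∧ 3 ≤ ({y, w} : Finset X).card) := by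
          rw [Finset.card_pair hyw]; simp
        rw [if_neg hc]
        refine ⟨by rw [h3]; simp, ?_⟩
        intro t ht htne
        rw [h3] at htne ⊢
        simp only [Finset.mem_insert, Finset.mem_singleton] at ht
        rcases ht with rfl | rfl
        · exact absurd rfl htne
        · rw [fy, fw]; omega
    · have : {a : X | f x < f a} = ({z, w} : Set X) := by
        ext a
        simp only [Set.mem_setOf_eq, Set.mem_insert_iff, Set.mem_singleton_iff, fx]
        constructor
        · intro ha
          rcases huniv a with rfl | rfl | rfl | rfl
          · omega
          · rw [fy] at ha; omega
          · exact Or.inl rfl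
          · exact Or.inr rfl
        · rintro (rfl | rfl)
          · rw [fz]; omega
          · rw [fw]; omega
      rw [this, Set.ncard_pair hzw]
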